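/- Let (Ω, F, P) be a probability space and X, U independent random variables with X ≥ 0, E[X] ≤ 1, and U satisfying P(U ≤ u) ≤ u for all u ∈ [0,1]. Then for every α ∈ (0,1], P(X/U ≥ 1/α) ≤ α. -/

import Mathlib

open MeasureTheory ENNReal Set ProbabilityTheory

/-- Uniformly-randomized Markov inequality: if `X, U` are independent nonnegative
(extended-real-valued) random variables with `E[X] ≤ 1` and `U` stochastically no
smaller than `Unif(0,1)`, then `P(X/U ≥ 1/α) ≤ α` for all `α ∈ (0,1]`.
(Division in `ℝ≥0∞` gives `x/0 = ∞` for `x > 0`, as in the convention.) -/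
theorem randomized_markov_inequality
    {Ω : Type*} [MeasurableSpace Ω] (P : Measure Ω) [IsProbabilityMeasure P]
    (X U : Ω → ℝ≥0∞) (hX : Measurable X) (hU : Measurable U)
    (hindep : IndepFun X U P)
    (hEX : ∫⁻ ω, X ω ∂P ≤ 1)
    (hUcdf : ∀ u ∈ Set.Icc (0:ℝ) 1, P {ω | U ω ≤ ENNReal.ofReal u} ≤ ENNReal.ofReal u) :
    ∀ α ∈ Set.Ioc (0:ℝ) 1,
      P {ω | (ENNReal.ofReal α)⁻¹ ≤ X ω / U ω} ≤ ENNReal.ofReal α := by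
  intro α hα
  obtain ⟨hα0, hα1⟩ := hα
  set a : ℝ≥0∞ := ENNReal.ofReal α with ha
  have ha0 : a ≠ 0 := by simp [ha, ENNReal.ofReal_eq_zero, not_le, hα0]
  have hatop : a ≠ ⊤ := ENNReal.ofReal_ne_top
  have ha1 : a ≤ 1 := by simpa [ha] using ENNReal.ofReal_le_one.mpr hα1
  -- Step 1: inclusion into {U ≤ a * X}
  have hsub : {ω | a⁻¹ ≤ X ω / U ω} ⊆ {ω | U ω ≤ a * X ω} := by
    intro ω hω
    simp only [Set.mem_setOf_eq] at hω ⊢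
    by_cases hU0 : U ω = 0
    · simp [hU0]
    · by_cases hUX : U ω = ⊤ ∧ X ω = ⊤
      · exfalso
        rw [hUX.1, hUX.2] at hω
        simp only [ENNReal.div_top] at hω
        have : a⁻¹ = 0 := le_antisymm hω zero_le
        rw [ENNReal.inv_eq_zero] at this
        exact hatop this
      · have h1 : (U ω ≠ 0 ∨ X ω ≠ 0) := Or.inl hU0
        have h2 : (U ω ≠ ⊤ ∨ X ω ≠ ⊤) := by
          rcases Classical.em (U ω = ⊤) with h | h
          · exact Or.inr (fun hx => hUX ⟨h, hx⟩)
          · exact Or.inl h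
        have := (ENNReal.le_div_iff_mul_le h1 h2).mp hω
        calc U ω = a * a⁻¹ * U ω := by rw [ENNReal.mul_inv_cancel ha0 hatop, one_mul]
          _ = a * (a⁻¹ * U ω) := by ring
          _ ≤ a * X ω := mul_le_mul_right this a
  refine le_trans (measure_mono hsub) ?_
  -- Step 2: product law
  have hS : MeasurableSet {p : ℝ≥0∞ × ℝ≥0∞ | p.2 ≤ a * p.1} :=
    measurableSet_le measurable_snd (measurable_fst.const_mul a)
  have hmap : P.map (fun ω => (X ω, U ω)) = (P.map X).prod (P.map U) :=
    (indepFun_iff_map_prod_eq_prod_map_map hX.aemeasurable hU.aemeasurable).mp hindep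
  have key : P {ω | U ω ≤ a * X ω}
      = ∫⁻ x, (P.map U) {u | u ≤ a * x} ∂(P.map X) := by
    have : P {ω | U ω ≤ a * X ω}
        = P.map (fun ω => (X ω, U ω)) {p : ℝ≥0∞ × ℝ≥0∞ | p.2 ≤ a * p.1} := by
      rw [Measure.map_apply (hX.prodMk hU) hS]
      rfl
    rw [this, hmap, Measure.prod_apply hS]
    rfl
  rw [key]
  -- Step 3: pointwise bound and integrate
  have hpt : ∀ x : ℝ≥0∞, (P.map U) {u | u ≤ a * x} ≤ a * x := by
    intro x
    have hmapU : (P.map U) {u | u ≤ a * x} = P {ω | U ω ≤ a * x} := by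
      have h1 : {u : ℝ≥0∞ | u ≤ a * x} = Set.Iic (a * x) := rfl
      rw [h1, Measure.map_apply hU measurableSet_Iic]
      rfl
    rw [hmapU]
    by_cases hx : 1 ≤ a * x
    · exact le_trans prob_le_one hx
    · push_neg at hx
      have hfin : a * x ≠ ⊤ := ne_top_of_lt (lt_of_lt_of_le hx le_top)
      have heq : ENNReal.ofReal ((a * x).toReal) = a * x := ENNReal.ofReal_toReal hfin
      have hmem : (a * x).toReal ∈ Set.Icc (0:ℝ) 1 := by
        constructor
        · exact ENNReal.toReal_nonneg
        · calc (a * x).toReal ≤ (1 : ℝ≥0∞).toReal :=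
                ENNReal.toReal_mono one_ne_top hx.le
            _ = 1 := by simp
      have := hUcdf _ hmem
      rw [heq] at this
      exact this
  calc ∫⁻ x, (P.map U) {u | u ≤ a * x} ∂(P.map X)
      ≤ ∫⁻ x, a * x ∂(P.map X) := lintegral_mono hpt
    _ = ∫⁻ ω, a * X ω ∂P := lintegral_map (measurable_id.const_mul a) hX
    _ = a * ∫⁻ ω, X ω ∂P := lintegral_const_mul a hX
    _ ≤ a * 1 := mul_le_mul_right hEX a
    _ = a := mul_one a
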